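/- arXiv:2110.01971 — 6 statements merged into one kernel-verified Lean document; each statement's English description precedes it below -/
import Mathlib

section
/- Let (g, R) be a Rota-Baxter Lie algebra of weight λ and (V, R_V) a representation of it, with g acting on V via ρ. Then the map ρ_{R_V} : g_R → End(V) defined by ρ_{R_V}(x)v := ρ(R(x))v + ρ(x)R_V(v) + λρ(x)v defines a representation of the Lie algebra g_R on V. -/
attribute [local instance 100] LieRing.ofAssociativeRing

/-- The bracket induced by a Rota-Baxter operator `T` of weight `lam`. -/
def rbBracket {k g : Type*} [CommRing k] [LieRing g] [LieAlgebra k g]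
    (T : g →ₗ[k] g) (lam : k) (x y : g) : g :=
  ⁅T x, y⁆ + ⁅x, T y⁆ + lam • ⁅x, y⁆

/-- The induced action of `g_T` on `V`. -/
def rbAction {k g V : Type*} [CommRing k] [LieRing g] [LieAlgebra k g]
    [AddCommGroup V] [Module k V] (ρ : g →ₗ⁅k⁆ Module.End k V)
    (T : g →ₗ[k] g) (Tv : V →ₗ[k] V) (lam : k) (x : g) (v : V) : V :=
  ρ (T x) v + ρ x (Tv v) + lam • ρ x v

/-- Let `(g, T)` be a Rota-Baxter Lie algebra of weight `lam` and `(V, Tv)`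
a representation of it (with `g` acting via `ρ`).  Then
`ρ_{Tv}(x) v := ρ(T x) v + ρ(x)(Tv v) + lam • ρ(x) v` defines a representation of the
Lie algebra `g_T` (with bracket `[x,y]_T`) on `V`. -/
theorem statement3 {k g V : Type*} [CommRing k] [LieRing g] [LieAlgebra k g]
    [AddCommGroup V] [Module k V] (ρ : g →ₗ⁅k⁆ Module.End k V)
    (T : g →ₗ[k] g) (Tv : V →ₗ[k] V) (lam : k)
    (hT : ∀ x y : g, ⁅T x, T y⁆ = T (⁅T x, y⁆ + ⁅x, T y⁆ + lam • ⁅x, y⁆))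
    (hTv : ∀ (x : g) (v : V),
      ρ (T x) (Tv v) = Tv (ρ (T x) v + ρ x (Tv v) + lam • ρ x v)) :
    ∀ (x y : g) (v : V),
      rbAction ρ T Tv lam (rbBracket T lam x y) v =
        rbAction ρ T Tv lam x (rbAction ρ T Tv lam y v) -
          rbAction ρ T Tv lam y (rbAction ρ T Tv lam x v) := by
  intro x y v
  simp only [rbAction, rbBracket]
  rw [← hT x y, ← hTv y v, ← hTv x v]
  simp only [map_add, map_smul, LieHom.map_lie, Ring.lie_def,
    LinearMap.sub_apply, Module.End.mul_apply, LinearMap.add_apply, LinearMap.smul_apply,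
    smul_add, smul_sub]
  module
end

section
/- Let (g,h,φ) be a morphism Lie algebra with representation (V,W,ψ). Define cochain groups C⁰ = V, Cⁿ = Hom(Λⁿg,V) ⊕ Hom(Λⁿh,W) ⊕ Hom(Λ^{n-1}g,W) for n ≥ 1, with differential δ(v) = (δ'v, δ''(ψv), 0) on C⁰ and δ(θ,γ,η) = (δ'θ, δ''γ, ψ∘θ − γ∘Λⁿφ − δ'''η) on Cⁿ, where δ', δ'', δ''' are the Chevalley-Eilenberg differentials of (g,V), (h,W), (g,W_φ) respectively. Then δ∘δ = 0. -/
/-- The Chevalley–Eilenberg differential (on plain cochains), for a bracket `br` on `L`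
and an action `ρ` of `L` on `M`:
`(δf)(x₁,…,x_{n+1}) = Σᵢ (-1)^{i+1} ρ(xᵢ) f(…,x̂ᵢ,…) + Σ_{i<j} (-1)^{i+j} f([xᵢ,xⱼ],…,x̂ᵢ,…,x̂ⱼ,…)`. -/
def ceD {L M : Type*} [AddCommGroup M] (br : L → L → L) (ρ : L → M → M)
    {n : ℕ} (f : (Fin n → L) → M) : (Fin (n + 1) → L) → M :=
  fun x =>
    (∑ i : Fin (n + 1), ((-1 : ℤ) ^ (i : ℕ)) • ρ (x i) (f (x ∘ i.succAbove)))
      + ∑ i : Fin (n + 1), ∑ j : Fin (n + 1),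
          if h : (i : ℕ) < (j : ℕ) then
            ((-1 : ℤ) ^ ((i : ℕ) + (j : ℕ))) • f (fun t : Fin n =>
              Fin.cons (α := fun _ => L) (br (x i) (x j))
                (fun s : Fin (n - 1) =>
                  x (j.succAbove (Fin.cast (by have := j.isLt; omega)
                    (Fin.succAbove ⟨(i : ℕ), by have := j.isLt; omega⟩ s))))
                (Fin.cast (by have := j.isLt; omega) t))
          else 0

attribute [local instance 100] LieRing.ofAssociativeRing

open Function

section Tuples
variable {α : Type*}

lemma CL1 {m : ℕ} (x : α) (y : Fin (m+1) → α) (p : Fin (m+1)) :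
    (Fin.cons x y : Fin (m+2) → α) ∘ (p.succ).succAbove = Fin.cons x (y ∘ p.succAbove) := by
  funext s
  induction s using Fin.cases with
  | zero => simp [Fin.succ_succAbove_zero]
  | succ r => simp [Fin.succ_succAbove_succ]

lemma cons_comp_succ {m : ℕ} (x : α) (y : Fin (m+1) → α) :
    (Fin.cons x y : Fin (m+2) → α) ∘ Fin.succ = y := by
  funext s; simp

lemma swap_cons_cons {n : ℕ} (a b : α) (w : Fin n → α) :
    (Fin.cons b (Fin.cons a w) : Fin (n+2) → α) ∘ (Equiv.swap 0 1) = Fin.cons a (Fin.cons b w) := by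
  funext s
  induction s using Fin.cases with
  | zero =>
    rw [comp_apply, Equiv.swap_apply_left,
      show (1 : Fin (n+2)) = (0 : Fin (n+1)).succ from Fin.succ_zero_eq_one.symm,
      Fin.cons_succ, Fin.cons_zero, Fin.cons_zero]
  | succ r =>
    induction r using Fin.cases with
    | zero =>
      rw [comp_apply, Fin.succ_zero_eq_one, Equiv.swap_apply_right, Fin.cons_zero,
        show (1 : Fin (n+2)) = (0 : Fin (n+1)).succ from Fin.succ_zero_eq_one.symm,
        Fin.cons_succ, Fin.cons_zero]
    | succ r2 =>
      have h1 : (r2.succ.succ : Fin (n+2)) ≠ 0 := Fin.succ_ne_zero _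
      have h2 : (r2.succ.succ : Fin (n+2)) ≠ 1 := by
        rw [← Fin.succ_zero_eq_one]
        exact fun hh => (Fin.succ_ne_zero r2) (Fin.succ_inj.mp hh)
      rw [comp_apply, Equiv.swap_apply_of_ne_of_ne h1 h2, Fin.cons_succ, Fin.cons_succ,
        Fin.cons_succ, Fin.cons_succ]

lemma cons_comp_swap {n : ℕ} (z : α) (v : Fin (n+1) → α) (i j : Fin (n+1)) :
    (Fin.cons z v : Fin (n+2) → α) ∘ (Equiv.swap i.succ j.succ) = Fin.cons z (v ∘ Equiv.swap i j) := by
  funext s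
  induction s using Fin.cases with
  | zero =>
    rw [comp_apply, Equiv.swap_apply_of_ne_of_ne (Fin.succ_ne_zero i).symm (Fin.succ_ne_zero j).symm]
    simp
  | succ r =>
    have : (Equiv.swap i.succ j.succ) r.succ = (Equiv.swap i j r).succ := by
      rcases eq_or_ne r i with rfl | hri
      · simp [Equiv.swap_apply_left]
      rcases eq_or_ne r j with rfl | hrj
      · simp [Equiv.swap_apply_right]
      rw [Equiv.swap_apply_of_ne_of_ne hri hrj,
        Equiv.swap_apply_of_ne_of_ne (by simpa [Fin.succ_inj] using hri) (by simpa [Fin.succ_inj] using hrj)]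
    rw [comp_apply, this]
    simp

lemma update_zero_cons {n : ℕ} (y : Fin (n+1) → α) (a : α) :
    Function.update y 0 a = Fin.cons a (y ∘ Fin.succ) := by
  funext s
  induction s using Fin.cases with
  | zero => simp
  | succ r => simp [Function.update_of_ne (Fin.succ_ne_zero r)]

end Tuples

section CE
variable {k L M : Type*} [CommRing k] [LieRing L] [LieAlgebra k L]
  [AddCommGroup M] [Module k M]

/-- The CE differential w.r.t. a Lie algebra action `π`. -/
def dC (π : L →ₗ⁅k⁆ Module.End k M) {n : ℕ} (f : (Fin n → L) → M) : (Fin (n+1) → L) → M :=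
  ceD (fun a b : L => ⁅a, b⁆) (fun x m => π x m) f

/-- Contraction with `z` in the first slot. -/
def iot (z : L) {n : ℕ} (f : (Fin (n+1) → L) → M) : (Fin n → L) → M := fun y => f (Fin.cons z y)

/-- Lie-derivative-type operator. -/
def Lop (π : L →ₗ⁅k⁆ Module.End k M) (x : L) {n : ℕ} (f : (Fin n → L) → M) :
    (Fin n → L) → M :=
  fun y => π x (f y) - ∑ q : Fin n, f (Function.update y q ⁅x, y q⁆)

/-- Antisymmetry in adjacent slots. -/
def AdjSw {n : ℕ} (G : (Fin n → L) → M) : Prop :=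
  ∀ (t : ℕ) (h : t + 1 < n) (v : Fin n → L),
    G (v ∘ Equiv.swap (⟨t, by omega⟩ : Fin n) ⟨t+1, h⟩) = - G v

variable (π : L →ₗ⁅k⁆ Module.End k M)

lemma pi_lie (x z : L) (m : M) : π ⁅x, z⁆ m = π x (π z m) - π z (π x m) := by
  rw [LieHom.map_lie, Ring.lie_def, LinearMap.sub_apply, Module.End.mul_apply, Module.End.mul_apply]

lemma ceD_succ_apply {L' M' : Type*} [AddCommGroup M'] (br : L' → L' → L') (ρ : L' → M' → M')
    {μ : ℕ} (f : (Fin (μ+1) → L') → M') (x : Fin (μ+2) → L') :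
    ceD br ρ f x = (∑ i : Fin (μ + 2), ((-1 : ℤ) ^ (i : ℕ)) • ρ (x i) (f (x ∘ i.succAbove)))
      + ∑ i : Fin (μ + 2), ∑ j : Fin (μ + 2),
          if h : (i : ℕ) < (j : ℕ) then
            ((-1 : ℤ) ^ ((i : ℕ) + (j : ℕ))) • f (Fin.cons (br (x i) (x j))
                (fun s : Fin μ =>
                  x (j.succAbove ((⟨(i : ℕ), by have := j.isLt; omega⟩ : Fin (μ+1)).succAbove s))))
          else 0 := rfl


lemma adjSw_alt {n : ℕ} (f : L [⋀^Fin n]→ₗ[k] M) : AdjSw (⇑f : (Fin n → L) → M) := by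
  intro t h v
  exact f.map_swap v (Fin.ne_of_val_ne (by simp))

lemma adjSw_sw01 {n : ℕ} {G : (Fin (n+2) → L) → M} (hG : AdjSw G) (a b : L) (w : Fin n → L) :
    G (Fin.cons a (Fin.cons b w)) = - G (Fin.cons b (Fin.cons a w)) := by
  have h2 := hG 0 (by omega) (Fin.cons b (Fin.cons a w))
  simp only [Fin.mk_zero] at h2
  rw [show (⟨0+1, by omega⟩ : Fin (n+2)) = 1 by ext; simp] at h2
  rwa [swap_cons_cons] at h2

lemma adjSw_iot {n : ℕ} {G : (Fin (n+1) → L) → M} (hG : AdjSw G) (z : L) :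
    AdjSw (iot z G) := by
  intro t h v
  obtain ⟨n', rfl⟩ : ∃ n', n = n' + 1 := ⟨n - 1, by omega⟩
  have h2 := hG (t+1) (by omega) (Fin.cons z v)
  unfold iot
  rw [← cons_comp_swap]
  exact h2

lemma mtf {n : ℕ} : ∀ {G : (Fin (n+1) → L) → M}, AdjSw G →
    ∀ (q : Fin (n+1)) (a : L) (y : Fin (n+1) → L),
    G (Fin.cons a (y ∘ q.succAbove)) = ((-1:ℤ)^(q:ℕ)) • G (Function.update y q a) := by
  induction n with
  | zero =>
    intro G _ q a y
    have hq : q = 0 := by ext; simp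
    rw [hq, Fin.succAbove_zero, update_zero_cons]
    simp
  | succ m IH =>
    intro G hG q a y
    induction q using Fin.cases with
    | zero =>
      rw [Fin.succAbove_zero, update_zero_cons]
      simp
    | succ q' =>
      conv_lhs => rw [← Fin.cons_self_tail y]
      rw [CL1, adjSw_sw01 hG]
      have h3 := IH (adjSw_iot hG (y 0)) q' a (Fin.tail y)
      unfold iot at h3
      rw [h3, Fin.cons_update, Fin.cons_self_tail, Fin.val_succ, pow_succ, mul_neg_one, neg_smul]

lemma dC_sub {n : ℕ} (f g : (Fin n → L) → M) : dC π (f - g) = dC π f - dC π g := by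
  have hd : ∀ (P : Prop) [Decidable P] (A B : P → M),
      (dite P (fun h => A h - B h) (fun _ => (0:M)))
        = dite P A (fun _ => 0) - dite P B (fun _ => 0) := by
    intros P _ A B; split <;> simp
  funext x
  simp only [dC, ceD, Pi.sub_apply, map_sub, smul_sub, hd, Finset.sum_sub_distrib]
  abel

lemma dC_zero {n : ℕ} : dC π (0 : (Fin n → L) → M) = 0 := by
  funext x
  simp only [dC, ceD, Pi.zero_apply, map_zero, smul_zero, dite_eq_ite, ite_self,
    Finset.sum_const_zero, add_zero, zero_add]

lemma dC_neg {n : ℕ} (f : (Fin n → L) → M) : dC π (-f) = - dC π f := by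
  have := dC_sub π 0 f
  simpa [dC_zero] using this

lemma Lop_sub {n : ℕ} (x : L) (f g : (Fin n → L) → M) :
    Lop π x (f - g) = Lop π x f - Lop π x g := by
  funext y
  simp only [Lop, Pi.sub_apply, map_sub, Finset.sum_sub_distrib]
  abel

lemma iot_Lop {n : ℕ} (G : (Fin (n+1) → L) → M) (x z : L) :
    iot z (Lop π x G) = Lop π x (iot z G) - iot ⁅x,z⁆ G := by
  funext y
  simp only [iot, Lop, Pi.sub_apply]
  rw [Fin.sum_univ_succ]
  simp only [Fin.cons_zero, Fin.cons_succ, ← Fin.cons_update, Fin.update_cons_zero]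
  abel

lemma adjSw_Lop {n : ℕ} {G : (Fin n → L) → M} (hG : AdjSw G) (x : L) :
    AdjSw (Lop π x G) := by
  intro t h v
  set σ := Equiv.swap (⟨t, by omega⟩ : Fin n) ⟨t+1, h⟩ with hσ
  simp only [Lop]
  have h1 : G (v ∘ σ) = - G v := hG t h v
  have h2 : ∀ q : Fin n, G (Function.update (v ∘ ⇑σ) q ⁅x, (v ∘ ⇑σ) q⁆)
      = - G (Function.update v (σ q) ⁅x, v (σ q)⁆) := by
    intro q
    have h3 : Function.update (v ∘ ⇑σ) q ⁅x, (v ∘ ⇑σ) q⁆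
        = (Function.update v (σ q) ⁅x, v (σ q)⁆) ∘ ⇑σ := by
      rw [update_comp_equiv]
      simp
    rw [h3]
    exact hG t h _
  rw [h1, Finset.sum_congr rfl (fun q _ => h2 q), Finset.sum_neg_distrib,
    Equiv.sum_comp σ (fun p => G (Function.update v p ⁅x, v p⁆)), map_neg]
  abel

lemma iot_curry {n : ℕ} (f : L [⋀^Fin (n+1)]→ₗ[k] M) (z : L) :
    iot z ⇑f = ⇑(f.curryLeft z) := by
  funext y
  exact (AlternatingMap.curryLeft_apply_apply f z y).symm

lemma altSw01 {n : ℕ} (f : L [⋀^Fin (n+2)]→ₗ[k] M) (a b : L) (w : Fin n → L) :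
    f (Fin.cons a (Fin.cons b w)) = - f (Fin.cons b (Fin.cons a w)) :=
  adjSw_sw01 (adjSw_alt f) a b w

lemma alt_neg0 {n : ℕ} (f : L [⋀^Fin (n+1)]→ₗ[k] M) (a : L) (w : Fin n → L) :
    f (Fin.cons (-a) w) = - f (Fin.cons a w) := by
  have h1 : ∀ c : L, f (Fin.cons c w) = f.curryLeft c w :=
    fun c => (AlternatingMap.curryLeft_apply_apply f c w).symm
  rw [h1, h1, map_neg, AlternatingMap.neg_apply]


lemma dC_succ_apply {μ : ℕ} (f : (Fin (μ+1) → L) → M) (x : Fin (μ+2) → L) :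
    dC π f x = (∑ i : Fin (μ + 2), ((-1 : ℤ) ^ (i : ℕ)) • π (x i) (f (x ∘ i.succAbove)))
      + ∑ i : Fin (μ + 2), ∑ j : Fin (μ + 2),
          if h : (i : ℕ) < (j : ℕ) then
            ((-1 : ℤ) ^ ((i : ℕ) + (j : ℕ))) • f (Fin.cons ⁅x i, x j⁆
                (fun s : Fin μ =>
                  x (j.succAbove ((⟨(i : ℕ), by have := j.isLt; omega⟩ : Fin (μ+1)).succAbove s))))
          else 0 := rfl

lemma dC_zero_apply (f : (Fin 0 → L) → M) (x : Fin 1 → L) :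
    dC π f x = π (x 0) (f (x ∘ (0 : Fin 1).succAbove)) := by
  simp [dC, ceD, Fin.sum_univ_one]

lemma bigT_eq {μ : ℕ} (x : L) (y : Fin (μ+2) → L) (p q : Fin (μ+2))
    (h : ((p.succ : Fin (μ+3)) : ℕ) < ((q.succ : Fin (μ+3)) : ℕ)) :
    (fun s : Fin (μ+1) => (Fin.cons x y : Fin (μ+3) → L)
        ((q.succ).succAbove ((⟨((p.succ : Fin (μ+3)) : ℕ),
          by have := (q.succ : Fin (μ+3)).isLt; omega⟩ : Fin (μ+2)).succAbove s)))
      = Fin.cons x (fun r : Fin μ => y (q.succAbove ((⟨(p : ℕ),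
          by have hh := h; rw [Fin.val_succ, Fin.val_succ] at hh; have h2 := q.isLt; omega⟩ : Fin (μ+1)).succAbove r))) := by
  have hp : (p : ℕ) < μ + 1 := by
    have hh := h; rw [Fin.val_succ, Fin.val_succ] at hh; have h2 := q.isLt; omega
  have e : (⟨((p.succ : Fin (μ+3)) : ℕ),
      by have := (q.succ : Fin (μ+3)).isLt; omega⟩ : Fin (μ+2)) = (⟨(p : ℕ), hp⟩ : Fin (μ+1)).succ := rfl
  funext s
  induction s using Fin.cases with
  | zero =>
    rw [e, Fin.succ_succAbove_zero, Fin.succ_succAbove_zero, Fin.cons_zero, Fin.cons_zero]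
  | succ r =>
    rw [e, Fin.succ_succAbove_succ, Fin.succ_succAbove_succ, Fin.cons_succ, Fin.cons_succ]

lemma cartan {m : ℕ} (G : (Fin (m+1) → L) → M) (hG : AdjSw G) (x : L) (y : Fin (m+1) → L) :
    dC π G (Fin.cons x y) = Lop π x G y - dC π (iot x G) y := by
  rcases m with _ | μ
  · rw [dC_succ_apply, Lop, dC_zero_apply]
    have hcan : ∀ (g : Fin 0 → L) (c : L), (Fin.cons c g : Fin 1 → L) = fun _ => c := by
      intro g c
      funext t
      induction t using Fin.cases with
      | zero => simp
      | succ r => exact r.elim0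
    simp only [Fin.sum_univ_succ, Fin.sum_univ_zero, Fin.sum_univ_one, Fin.val_zero, Fin.val_succ,
      pow_zero, one_smul, zero_add, pow_one, Fin.cons_zero, Fin.cons_succ, Fin.succAbove_zero,
      cons_comp_succ, CL1, hcan, lt_self_iff_false, Nat.zero_lt_succ, Nat.not_lt_zero,
      dite_true, dite_false, update_zero_cons, iot, neg_one_smul, add_zero]
    abel
  · rw [dC_succ_apply π G (Fin.cons x y), dC_succ_apply π (iot x G) y]
    simp only [Lop]
    have h1 : (∑ i : Fin (μ+1+2), ((-1:ℤ)^(i:ℕ)) •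
          π ((Fin.cons x y : Fin (μ+1+2) → L) i) (G ((Fin.cons x y : Fin (μ+1+2) → L) ∘ i.succAbove)))
        = π x (G y) - ∑ i : Fin (μ+2), ((-1:ℤ)^(i:ℕ)) • π (y i) ((iot x G) (y ∘ i.succAbove)) := by
      rw [Fin.sum_univ_succ]
      simp only [Fin.val_zero, pow_zero, one_smul, Fin.cons_zero, Fin.succAbove_zero,
        cons_comp_succ, Fin.cons_succ, CL1, Fin.val_succ, pow_succ, mul_neg_one, neg_smul, iot,
        Finset.sum_neg_distrib]
      abel
    have hA : (∑ j : Fin (μ+1+2),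
          if h : ((0 : Fin (μ+1+2)) : ℕ) < (j : ℕ) then
            ((-1 : ℤ) ^ (((0 : Fin (μ+1+2)) : ℕ) + (j : ℕ))) •
              G (Fin.cons ⁅(Fin.cons x y : Fin (μ+1+2) → L) 0, (Fin.cons x y : Fin (μ+1+2) → L) j⁆
                (fun s : Fin (μ+1) => (Fin.cons x y : Fin (μ+1+2) → L)
                  (j.succAbove ((⟨((0 : Fin (μ+1+2)) : ℕ), by have := j.isLt; omega⟩ : Fin (μ+1+1)).succAbove s))))
          else 0)
        = - ∑ q : Fin (μ+1+1), G (Function.update y q ⁅x, y q⁆) := by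
      rw [Fin.sum_univ_succ, dif_neg (lt_irrefl _), zero_add, ← Finset.sum_neg_distrib]
      apply Finset.sum_congr rfl
      intro q _
      rw [dif_pos (by simp only [Fin.val_zero, Fin.val_succ]; omega)]
      simp only [Fin.cons_zero, Fin.cons_succ, Fin.val_zero, Fin.mk_zero, Fin.succAbove_zero,
        Fin.succ_succAbove_succ]
      rw [show (fun s : Fin (μ+1) => y (q.succAbove s)) = y ∘ q.succAbove from rfl,
        mtf hG q ⁅x, y q⁆ y, smul_smul,
        show ((-1:ℤ)^((0:ℕ) + ((q.succ : Fin (μ+1+2)) : ℕ)) * (-1:ℤ)^((q:ℕ)) = -1) from by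
          rw [Fin.val_succ, zero_add, ← pow_add,
            show (q:ℕ)+1+(q:ℕ) = 2*(q:ℕ)+1 from by ring, pow_succ, pow_mul, neg_one_sq, one_pow,
            one_mul],
        neg_one_smul]
    have hB : ∀ p : Fin (μ+1+1), (∑ j : Fin (μ+1+2),
          if h : ((p.succ : Fin (μ+1+2)) : ℕ) < (j : ℕ) then
            ((-1 : ℤ) ^ (((p.succ : Fin (μ+1+2)) : ℕ) + (j : ℕ))) •
              G (Fin.cons ⁅(Fin.cons x y : Fin (μ+1+2) → L) p.succ, (Fin.cons x y : Fin (μ+1+2) → L) j⁆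
                (fun s : Fin (μ+1) => (Fin.cons x y : Fin (μ+1+2) → L)
                  (j.succAbove ((⟨((p.succ : Fin (μ+1+2)) : ℕ), by have := j.isLt; omega⟩ : Fin (μ+1+1)).succAbove s))))
          else 0)
        = - ∑ q : Fin (μ+1+1),
            if h : (p : ℕ) < (q : ℕ) then
              ((-1 : ℤ) ^ ((p : ℕ) + (q : ℕ))) •
                (iot x G) (Fin.cons ⁅y p, y q⁆
                  (fun s : Fin μ => y (q.succAbove ((⟨(p : ℕ), by have := q.isLt; omega⟩ : Fin (μ+1)).succAbove s))))
            else 0 := by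
      intro p
      rw [Fin.sum_univ_succ, dif_neg (by simp only [Fin.val_zero]; omega), zero_add,
        ← Finset.sum_neg_distrib]
      apply Finset.sum_congr rfl
      intro q _
      by_cases hpq : (p : ℕ) < (q : ℕ)
      · rw [dif_pos (by simp only [Fin.val_succ]; omega), dif_pos hpq]
        rw [Fin.cons_succ, Fin.cons_succ, bigT_eq x y p q (by simp only [Fin.val_succ]; omega),
          adjSw_sw01 hG]
        simp only [iot, smul_neg]
        rw [show ((-1:ℤ)^(((p.succ : Fin (μ+1+2)) : ℕ) + ((q.succ : Fin (μ+1+2)) : ℕ))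
            = (-1:ℤ)^((p:ℕ) + (q:ℕ))) from by
          rw [Fin.val_succ, Fin.val_succ, show (p:ℕ)+1+((q:ℕ)+1) = (p:ℕ)+(q:ℕ)+2 from by ring,
            pow_add, neg_one_sq, mul_one]]
      · rw [dif_neg (by simp only [Fin.val_succ]; omega), dif_neg hpq, neg_zero]
    have h2 : (∑ i : Fin (μ+1+2), ∑ j : Fin (μ+1+2),
          if h : (i : ℕ) < (j : ℕ) then
            ((-1 : ℤ) ^ ((i : ℕ) + (j : ℕ))) •
              G (Fin.cons ⁅(Fin.cons x y : Fin (μ+1+2) → L) i, (Fin.cons x y : Fin (μ+1+2) → L) j⁆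
                (fun s : Fin (μ+1) => (Fin.cons x y : Fin (μ+1+2) → L)
                  (j.succAbove ((⟨(i : ℕ), by have := j.isLt; omega⟩ : Fin (μ+1+1)).succAbove s))))
          else 0)
        = (- ∑ q : Fin (μ+1+1), G (Function.update y q ⁅x, y q⁆))
          - ∑ i : Fin (μ+1+1), ∑ j : Fin (μ+1+1),
            if h : (i : ℕ) < (j : ℕ) then
              ((-1 : ℤ) ^ ((i : ℕ) + (j : ℕ))) •
                (iot x G) (Fin.cons ⁅y i, y j⁆
                  (fun s : Fin μ => y (j.succAbove ((⟨(i : ℕ), by have := j.isLt; omega⟩ : Fin (μ+1)).succAbove s))))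
            else 0 := by
      rw [Fin.sum_univ_succ, hA, Finset.sum_congr rfl (fun p _ => hB p),
        Finset.sum_neg_distrib]
      abel
    rw [h1, h2]
    abel


lemma iot_dC {n : ℕ} {G : (Fin (n+1) → L) → M} (hG : AdjSw G) (z : L) :
    iot z (dC π G) = Lop π z G - dC π (iot z G) := by
  funext u
  exact cartan π G hG z u

lemma dC_cons_cons {m : ℕ} (f : L [⋀^Fin (m+2)]→ₗ[k] M) (a b : L) (u : Fin (m+1) → L) :
    dC π ⇑f (Fin.cons a (Fin.cons b u))
      = Lop π a (iot b ⇑f) u - iot ⁅a,b⁆ ⇑f u - Lop π b (iot a ⇑f) u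
        + dC π (iot b (iot a ⇑f)) u := by
  rw [cartan π ⇑f (adjSw_alt f) a (Fin.cons b u)]
  have e1 : Lop π a ⇑f (Fin.cons b u) = Lop π a (iot b ⇑f) u - iot ⁅a,b⁆ ⇑f u := by
    have h9 := congrFun (iot_Lop π ⇑f a b) u
    rw [Pi.sub_apply] at h9
    exact h9
  have e2 : dC π (iot a ⇑f) (Fin.cons b u)
      = Lop π b (iot a ⇑f) u - dC π (iot b (iot a ⇑f)) u := by
    exact cartan π (iot a ⇑f) (adjSw_iot (adjSw_alt f) a) b u
  rw [e1, e2]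
  abel

lemma dC_sw01 {m : ℕ} (f : L [⋀^Fin (m+1)]→ₗ[k] M) (a b : L) (u : Fin m → L) :
    dC π ⇑f (Fin.cons b (Fin.cons a u)) = - dC π ⇑f (Fin.cons a (Fin.cons b u)) := by
  rcases m with _ | m'
  · have hcan : ∀ (g : Fin 0 → L) (c : L), (Fin.cons c g : Fin 1 → L) = fun _ => c := by
      intro g c
      funext t
      induction t using Fin.cases with
      | zero => simp
      | succ r => exact r.elim0
    have hneg1 : ∀ c : L, f (fun _ : Fin 1 => -c) = - f (fun _ => c) := by
      intro c
      have h8 := alt_neg0 f c (fun s : Fin 0 => c)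
      rwa [hcan, hcan] at h8
    have hba : (⁅b, a⁆ : L) = -⁅a, b⁆ := by rw [← lie_skew]
    rw [dC_succ_apply, dC_succ_apply]
    simp only [Fin.sum_univ_succ, Fin.sum_univ_zero, Fin.sum_univ_one, Fin.val_zero, Fin.val_succ,
      pow_zero, one_smul, zero_add, pow_one, Fin.cons_zero, Fin.cons_succ, Fin.succAbove_zero,
      cons_comp_succ, CL1, lt_self_iff_false, Nat.zero_lt_succ, Nat.not_lt_zero,
      dite_true, dite_false, neg_one_smul, add_zero, hba, hcan, hneg1]
    abel
  · rw [dC_cons_cons, dC_cons_cons]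
    have k1 : iot ⁅b,a⁆ (⇑f) u = - iot ⁅a,b⁆ (⇑f) u := by
      show f (Fin.cons ⁅b,a⁆ u) = - f (Fin.cons ⁅a,b⁆ u)
      rw [show (⁅b, a⁆ : L) = -⁅a, b⁆ from by rw [← lie_skew], alt_neg0]
    have k2 : iot a (iot b (⇑f)) = - iot b (iot a (⇑f)) := by
      funext w
      show f (Fin.cons b (Fin.cons a w)) = - f (Fin.cons a (Fin.cons b w))
      exact altSw01 f b a w
    rw [k1, k2, dC_neg]
    simp only [Pi.neg_apply]
    abel

lemma adjSw_dC_aux : ∀ (n : ℕ) (f : L [⋀^Fin n]→ₗ[k] M), AdjSw (dC π ⇑f) := by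
  intro n
  induction n with
  | zero => intro f t h v; exact absurd h (by omega)
  | succ m IH =>
    intro f t h v
    rcases t with _ | t'
    · have hv : Fin.cons (v 0) (Fin.cons (Fin.tail v 0) (Fin.tail (Fin.tail v))) = v := by
        rw [Fin.cons_self_tail, Fin.cons_self_tail]
      rw [← hv,
        show (⟨0, by omega⟩ : Fin (m+2)) = 0 from Fin.mk_zero,
        show (⟨0+1, h⟩ : Fin (m+2)) = 1 from by ext; simp,
        swap_cons_cons]
      exact dC_sw01 π f (v 0) (Fin.tail v 0) (Fin.tail (Fin.tail v))
    · have hw : Fin.cons (v 0) (Fin.tail v) = v := Fin.cons_self_tail v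
      rw [← hw]
      have e : (Fin.cons (v 0) (Fin.tail v) : Fin (m+2) → L)
            ∘ (Equiv.swap (⟨t'+1, by omega⟩ : Fin (m+2)) ⟨t'+1+1, h⟩)
          = Fin.cons (v 0) (Fin.tail v ∘ Equiv.swap (⟨t', by omega⟩ : Fin (m+1)) ⟨t'+1, by omega⟩) := by
        rw [show (⟨t'+1, by omega⟩ : Fin (m+2)) = (⟨t', by omega⟩ : Fin (m+1)).succ from rfl,
          show (⟨t'+1+1, h⟩ : Fin (m+2)) = (⟨t'+1, by omega⟩ : Fin (m+1)).succ from rfl,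
          cons_comp_swap]
      rw [e]
      rw [cartan π ⇑f (adjSw_alt f) (v 0), cartan π ⇑f (adjSw_alt f) (v 0)]
      have l1 := adjSw_Lop π (adjSw_alt f) (v 0) t' (by omega) (Fin.tail v)
      have l2 : dC π (iot (v 0) ⇑f)
            (Fin.tail v ∘ Equiv.swap (⟨t', by omega⟩ : Fin (m+1)) ⟨t'+1, by omega⟩)
          = - dC π (iot (v 0) ⇑f) (Fin.tail v) := by
        rw [iot_curry]
        exact IH (f.curryLeft (v 0)) t' (by omega) (Fin.tail v)
      rw [l1, l2]
      abel

lemma adjSw_dC {n : ℕ} (f : L [⋀^Fin n]→ₗ[k] M) : AdjSw (dC π ⇑f) :=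
  adjSw_dC_aux π n f

lemma lop_comm {n : ℕ} (f : L [⋀^Fin n]→ₗ[k] M) (x z : L) (y : Fin n → L) :
    Lop π x (Lop π z ⇑f) y - Lop π z (Lop π x ⇑f) y = Lop π ⁅x, z⁆ ⇑f y := by
  have hexp : ∀ (x z : L), Lop π x (Lop π z ⇑f) y
      = π x (π z (f y)) - ∑ q : Fin n, π x (f (Function.update y q ⁅z, y q⁆))
        - ∑ q : Fin n, π z (f (Function.update y q ⁅x, y q⁆))
        + ∑ q : Fin n, f (Function.update y q ⁅z, ⁅x, y q⁆⁆)
        + ∑ q : Fin n, ∑ r ∈ Finset.univ.erase q,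
            f (Function.update (Function.update y q ⁅x, y q⁆) r ⁅z, y r⁆) := by
    intro x z
    simp only [Lop, map_sub, map_sum]
    have hq : ∀ q : Fin n,
        (π z (f (Function.update y q ⁅x, y q⁆))
          - ∑ r : Fin n, f (Function.update (Function.update y q ⁅x, y q⁆) r
              ⁅z, (Function.update y q ⁅x, y q⁆) r⁆))
        = π z (f (Function.update y q ⁅x, y q⁆))
          - f (Function.update y q ⁅z, ⁅x, y q⁆⁆)
          - ∑ r ∈ Finset.univ.erase q,
              f (Function.update (Function.update y q ⁅x, y q⁆) r ⁅z, y r⁆) := by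
      intro q
      rw [← Finset.sum_erase_add Finset.univ _ (Finset.mem_univ q)]
      rw [Function.update_self, Function.update_idem]
      rw [Finset.sum_congr rfl (fun r hr => by
        rw [Function.update_of_ne (Finset.ne_of_mem_erase hr)])]
      abel
    rw [Finset.sum_congr rfl (fun q _ => hq q), Finset.sum_sub_distrib, Finset.sum_sub_distrib]
    abel
  rw [hexp x z, hexp z x]
  have hdd : (∑ q : Fin n, ∑ r ∈ Finset.univ.erase q,
        f (Function.update (Function.update y q ⁅x, y q⁆) r ⁅z, y r⁆))
      = ∑ q : Fin n, ∑ r ∈ Finset.univ.erase q,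
        f (Function.update (Function.update y q ⁅z, y q⁆) r ⁅x, y r⁆) := by
    have h1 : ∀ (a b : L), (∑ q : Fin n, ∑ r ∈ Finset.univ.erase q,
          f (Function.update (Function.update y q ⁅a, y q⁆) r ⁅b, y r⁆))
        = ∑ q : Fin n, ∑ r : Fin n, if r ≠ q then
            f (Function.update (Function.update y q ⁅a, y q⁆) r ⁅b, y r⁆) else 0 := by
      intro a b
      refine Finset.sum_congr rfl (fun q _ => ?_)
      rw [← Finset.filter_ne', Finset.sum_filter]
    rw [h1, h1, Finset.sum_comm]
    refine Finset.sum_congr rfl (fun q _ => Finset.sum_congr rfl (fun r _ => ?_))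
    rcases eq_or_ne q r with rfl | hqr
    · simp
    · rw [if_pos hqr, if_pos hqr.symm, Function.update_comm hqr.symm]
  have hjac : (∑ q : Fin n, f (Function.update y q ⁅x, ⁅z, y q⁆⁆))
      = (∑ q : Fin n, f (Function.update y q ⁅⁅x,z⁆, y q⁆))
        + ∑ q : Fin n, f (Function.update y q ⁅z, ⁅x, y q⁆⁆) := by
    rw [← Finset.sum_add_distrib]
    refine Finset.sum_congr rfl (fun q _ => ?_)
    rw [← AlternatingMap.map_update_add, ← leibniz_lie]
  simp only [Lop]
  rw [pi_lie, hdd, hjac]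
  abel

lemma dC_Lop : ∀ {n : ℕ} (f : L [⋀^Fin n]→ₗ[k] M) (x : L),
    dC π (Lop π x ⇑f) = Lop π x (dC π ⇑f) := by
  intro n
  induction n with
  | zero =>
    intro f x
    funext w
    rw [dC_zero_apply π (Lop π x ⇑f) w]
    simp only [Lop, Fin.sum_univ_succ, Fin.sum_univ_zero, sub_zero, add_zero]
    rw [dC_zero_apply π ⇑f w, dC_zero_apply π ⇑f (Function.update w 0 ⁅x, w 0⁆)]
    rw [Function.update_self]
    rw [show (Function.update w 0 ⁅x, w 0⁆) ∘ (0 : Fin 1).succAbove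
        = w ∘ (0 : Fin 1).succAbove from Subsingleton.elim _ _]
    rw [pi_lie]
    abel
  | succ m IH =>
    intro f x
    funext w
    rw [← Fin.cons_self_tail w]
    rw [cartan π (Lop π x ⇑f) (adjSw_Lop π (adjSw_alt f) x) (w 0) (Fin.tail w)]
    rw [iot_Lop π ⇑f x (w 0), dC_sub]
    rw [show Lop π x (dC π ⇑f) (Fin.cons (w 0) (Fin.tail w))
        = iot (w 0) (Lop π x (dC π ⇑f)) (Fin.tail w) from rfl]
    rw [iot_Lop π (dC π ⇑f) x (w 0)]
    rw [iot_dC π (adjSw_alt f) (w 0), iot_dC π (adjSw_alt f) ⁅x, w 0⁆]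
    rw [Lop_sub π x]
    rw [iot_curry f (w 0)]
    rw [IH (f.curryLeft (w 0)) x]
    simp only [Pi.sub_apply]
    rw [show Lop π ⁅x, w 0⁆ ⇑f (Fin.tail w)
        = Lop π x (Lop π (w 0) ⇑f) (Fin.tail w) - Lop π (w 0) (Lop π x ⇑f) (Fin.tail w)
        from (lop_comm π f x (w 0) (Fin.tail w)).symm]
    abel

theorem dC_dC_aux : ∀ (n : ℕ) (f : L [⋀^Fin n]→ₗ[k] M), dC π (dC π ⇑f) = 0 := by
  intro n
  induction n with
  | zero =>
    intro f
    have hdf : dC π ⇑f = fun u : Fin 1 → L => π (u 0) (f (fun s : Fin 0 => s.elim0)) := by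
      funext u
      rw [dC_zero_apply]
      exact congrArg _ (congrArg _ (Subsingleton.elim _ _))
    funext v
    rw [dC_succ_apply, hdf]
    simp only [Fin.sum_univ_succ, Fin.sum_univ_zero, Fin.sum_univ_one, Fin.val_zero, Fin.val_succ,
      pow_zero, one_smul, zero_add, pow_one, Fin.cons_zero, Fin.cons_succ, Fin.succAbove_zero,
      Function.comp_apply, Fin.succ_succAbove_zero, lt_self_iff_false, Nat.zero_lt_succ,
      Nat.not_lt_zero, dite_true, dite_false, neg_one_smul, add_zero]
    rw [pi_lie]
    simp only [Pi.zero_apply]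
    abel
  | succ m IH =>
    intro f
    funext w
    rw [← Fin.cons_self_tail w]
    rw [cartan π (dC π ⇑f) (adjSw_dC π f) (w 0) (Fin.tail w)]
    rw [iot_dC π (adjSw_alt f) (w 0), dC_sub, iot_curry f (w 0)]
    rw [IH (f.curryLeft (w 0))]
    rw [dC_Lop π f (w 0)]
    simp only [Pi.sub_apply, Pi.zero_apply, sub_zero, sub_self]

theorem dC_dC {n : ℕ} (f : L [⋀^Fin n]→ₗ[k] M) : dC π (dC π ⇑f) = 0 :=
  dC_dC_aux π n f

end CE

section Assemble
variable {k g h V W : Type*} [CommRing k]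
    [LieRing g] [LieAlgebra k g] [LieRing h] [LieAlgebra k h]
    [AddCommGroup V] [Module k V] [AddCommGroup W] [Module k W]
    (φ : g →ₗ⁅k⁆ h) (ρV : g →ₗ⁅k⁆ Module.End k V) (ρW : h →ₗ⁅k⁆ Module.End k W)
    (ψ : V →ₗ[k] W)

lemma push_psi (hψ : ∀ (x : g) (v : V), ψ (ρV x v) = ρW (φ x) (ψ v))
    {n : ℕ} (f : (Fin n → g) → V) (y : Fin (n+1) → g) :
    ψ (ceD (fun a b : g => ⁅a, b⁆) (fun x u => ρV x u) f y)
      = ceD (fun a b : g => ⁅a, b⁆) (fun x w => ρW (φ x) w) (fun w => ψ (f w)) y := by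
  simp only [ceD, map_add, map_sum, map_zsmul, map_zero, apply_dite ψ, hψ]

lemma phi_cons {n' : ℕ} (A : h) (B : g) (gh : Fin n' → h) (gg : Fin n' → g)
    (hA : A = φ B) (hg : ∀ s, gh s = φ (gg s)) (u : Fin (n'+1)) :
    (Fin.cons A gh : Fin (n'+1) → h) u = φ ((Fin.cons B gg : Fin (n'+1) → g) u) := by
  refine Fin.cases (motive := fun u =>
    (Fin.cons A gh : Fin (n'+1) → h) u = φ ((Fin.cons B gg : Fin (n'+1) → g) u)) ?_ ?_ u
  · show (Fin.cons A gh : Fin (n'+1) → h) 0 = φ ((Fin.cons B gg : Fin (n'+1) → g) 0)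
    rw [Fin.cons_zero, Fin.cons_zero, hA]
  · intro s
    show (Fin.cons A gh : Fin (n'+1) → h) s.succ = φ ((Fin.cons B gg : Fin (n'+1) → g) s.succ)
    rw [Fin.cons_succ, Fin.cons_succ, hg s]

lemma pull_phi {n : ℕ} (γ : (Fin n → h) → W) (y : Fin (n+1) → g) :
    ceD (fun a b : h => ⁅a, b⁆) (fun z w => ρW z w) γ (fun i => φ (y i))
      = ceD (fun a b : g => ⁅a, b⁆) (fun x w => ρW (φ x) w) (fun w => γ (fun i => φ (w i))) y := by
  simp only [ceD]
  congr 1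
  refine Finset.sum_congr rfl (fun i _ => Finset.sum_congr rfl (fun j _ => ?_))
  by_cases hij : (i : ℕ) < (j : ℕ)
  · rw [dif_pos hij, dif_pos hij]
    refine congrArg _ (congrArg γ (funext fun t => ?_))
    exact phi_cons φ _ _ _ _ (φ.map_lie (y i) (y j)).symm (fun s => rfl) _
  · rw [dif_neg hij, dif_neg hij]

end Assemble


/-- Let `(g,h,φ)` be a morphism Lie algebra with representation `(V,W,ψ)`.
The cochain complex of the morphism Lie algebra has `C⁰ = V` and, for `n ≥ 1`,
`Cⁿ = Hom(Λⁿg,V) ⊕ Hom(Λⁿh,W) ⊕ Hom(Λ^{n-1}g,W)`, with differential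
`δ(v) = (δ'v, δ''(ψ v), 0)` on `C⁰` and
`δ(θ,γ,η) = (δ'θ, δ''γ, ψ∘θ − γ∘Λⁿφ − δ'''η)` in higher degrees,
where `δ', δ'', δ'''` are the Chevalley–Eilenberg differentials of `(g,V)`, `(h,W)` and
`(g,W_φ)`.  Then `δ ∘ δ = 0`, in every degree and in every component. -/
theorem statement8 {k g h V W : Type*} [CommRing k]
    [LieRing g] [LieAlgebra k g] [LieRing h] [LieAlgebra k h]
    [AddCommGroup V] [Module k V] [AddCommGroup W] [Module k W]
    (φ : g →ₗ⁅k⁆ h) (ρV : g →ₗ⁅k⁆ Module.End k V) (ρW : h →ₗ⁅k⁆ Module.End k W)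
    (ψ : V →ₗ[k] W)
    (hψ : ∀ (x : g) (v : V), ψ (ρV x v) = ρW (φ x) (ψ v)) :
    -- δ ∘ δ = 0 starting from C⁰ = V, where δ(v) = (δ'v, δ''(ψv), 0):
    (∀ v : V,
      ceD (fun a b : g => ⁅a, b⁆) (fun x u => ρV x u)
          (ceD (fun a b : g => ⁅a, b⁆) (fun x u => ρV x u)
            (fun _ : Fin 0 → g => v)) = 0 ∧
      ceD (fun a b : h => ⁅a, b⁆) (fun z w => ρW z w)
          (ceD (fun a b : h => ⁅a, b⁆) (fun z w => ρW z w)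
            (fun _ : Fin 0 → h => ψ v)) = 0 ∧
      (fun y : Fin 1 → g =>
          ψ (ceD (fun a b : g => ⁅a, b⁆) (fun x u => ρV x u) (fun _ : Fin 0 → g => v) y)
            - ceD (fun a b : h => ⁅a, b⁆) (fun z w => ρW z w) (fun _ : Fin 0 → h => ψ v)
                (fun i => φ (y i))
            - ceD (fun a b : g => ⁅a, b⁆) (fun x w => ρW (φ x) w)
                (0 : (Fin 0 → g) → W) y) = 0) ∧
    -- δ ∘ δ = 0 on Cⁿ for n ≥ 1, i.e. on a triple (θ, γ, η) of alternating cochains: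
    (∀ (n : ℕ) (θ : AlternatingMap k g V (Fin (n + 1)))
        (γ : AlternatingMap k h W (Fin (n + 1))) (η : AlternatingMap k g W (Fin n)),
      ceD (fun a b : g => ⁅a, b⁆) (fun x u => ρV x u)
          (ceD (fun a b : g => ⁅a, b⁆) (fun x u => ρV x u) (⇑θ)) = 0 ∧
      ceD (fun a b : h => ⁅a, b⁆) (fun z w => ρW z w)
          (ceD (fun a b : h => ⁅a, b⁆) (fun z w => ρW z w) (⇑γ)) = 0 ∧
      (fun y : Fin (n + 2) → g =>
          ψ (ceD (fun a b : g => ⁅a, b⁆) (fun x u => ρV x u) (⇑θ) y)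
            - ceD (fun a b : h => ⁅a, b⁆) (fun z w => ρW z w) (⇑γ) (fun i => φ (y i))
            - ceD (fun a b : g => ⁅a, b⁆) (fun x w => ρW (φ x) w)
                (fun y' : Fin (n + 1) → g =>
                  ψ (θ y') - γ (fun i => φ (y' i))
                    - ceD (fun a b : g => ⁅a, b⁆) (fun x w => ρW (φ x) w) (⇑η) y') y) = 0) := by
  have hconv : ∀ {n₀ : ℕ} (F : (Fin n₀ → g) → W),
      ceD (fun a b : g => ⁅a, b⁆) (fun x w => ρW (φ x) w) F = dC (ρW.comp φ) F :=
    fun F => rfl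
  constructor
  · intro v
    refine ⟨?_, ?_, ?_⟩
    · have hc : (fun _ : Fin 0 → g => v)
          = ⇑(AlternatingMap.constOfIsEmpty k g (Fin 0) v) := rfl
      rw [hc]
      exact dC_dC ρV _
    · have hc : (fun _ : Fin 0 → h => ψ v)
          = ⇑(AlternatingMap.constOfIsEmpty k h (Fin 0) (ψ v)) := rfl
      rw [hc]
      exact dC_dC ρW _
    · funext y
      rw [push_psi φ ρV ρW ψ hψ (fun _ : Fin 0 → g => v) y,
        pull_phi φ ρW (fun _ : Fin 0 → h => ψ v) y]
      simp only [hconv]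
      rw [dC_zero]
      simp only [Pi.zero_apply, sub_zero, sub_self]
  · intro n θ γ η
    refine ⟨dC_dC ρV θ, dC_dC ρW γ, ?_⟩
    funext y
    rw [push_psi φ ρV ρW ψ hψ (⇑θ) y, pull_phi φ ρW (⇑γ) y]
    have e : (fun y' : Fin (n + 1) → g =>
          ψ (θ y') - γ (fun i => φ (y' i))
            - ceD (fun a b : g => ⁅a, b⁆) (fun x w => ρW (φ x) w) (⇑η) y')
        = ((fun w => ψ (θ w)) - (fun w => γ (fun i => φ (w i)))
            - dC (ρW.comp φ) (⇑η) : (Fin (n+1) → g) → W) := rfl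
    rw [e]
    simp only [hconv]
    rw [dC_sub, dC_sub, dC_dC (ρW.comp φ) η]
    simp only [Pi.sub_apply, Pi.zero_apply, sub_zero]
    abel
end

section
/- Let (g,h,φ) be a morphism Lie algebra and (V,W,ψ) a representation of it. If the Chevalley-Eilenberg cohomology groups H^n_CE(g,V), H^n_CE(h,W), and H^{n-1}_CE(g,W_φ) all vanish, then the n-th cohomology group H^n_mLA(φ,ψ) of the morphism Lie algebra also vanishes. -/
attribute [local instance 100] LieRing.ofAssociativeRing

lemma sum_dite_sub' {ι M : Type*} [AddCommGroup M] (s : Finset ι) (p : ι → Prop)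
    [DecidablePred p] (F G : ∀ i, p i → M) :
    ∑ i ∈ s, (if h : p i then F i h - G i h else 0)
      = (∑ i ∈ s, if h : p i then F i h else 0) - ∑ i ∈ s, (if h : p i then G i h else 0) := by
  rw [← Finset.sum_sub_distrib]
  exact Finset.sum_congr rfl fun i _ => by split <;> simp

lemma ceD_sub {L M : Type*} [AddCommGroup M] (br : L → L → L) (ρ : L → M → M)
    (hρ : ∀ x (a b : M), ρ x (a - b) = ρ x a - ρ x b)
    {n : ℕ} (f g : (Fin n → L) → M) :
    ceD br ρ (f - g) = ceD br ρ f - ceD br ρ g := by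
  funext x
  simp only [ceD, Pi.sub_apply, hρ, smul_sub, sum_dite_sub', Finset.sum_sub_distrib]
  abel

lemma ceD_comp {L L' M M' : Type*} [AddCommGroup M] [AddCommGroup M']
    (br : L → L → L) (br' : L' → L' → L') (ρ : L → M → M) (ρ' : L' → M' → M')
    (φL : L → L') (T : M' →+ M)
    (hbr : ∀ a b, φL (br a b) = br' (φL a) (φL b))
    (hTρ : ∀ (l : L) (m : M'), T (ρ' (φL l) m) = ρ l (T m))
    {n : ℕ} (f : (Fin n → L') → M') :
    ceD br ρ (fun y => T (f (φL ∘ y))) = fun x => T (ceD br' ρ' f (φL ∘ x)) := by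
  funext x
  simp only [ceD, map_add, map_sum, map_zsmul, apply_dite (⇑T), map_zero, hTρ,
    Function.comp_apply]
  congr 1
  refine Finset.sum_congr rfl fun i _ => Finset.sum_congr rfl fun j _ => ?_
  split
  · refine congrArg _ (congrArg _ (congrArg f (funext fun t => ?_)))
    show (φL ∘ Fin.cons _ _) _ = _
    rw [Fin.comp_cons, hbr]
    rfl
  · rfl

/-- Let `(g,h,φ)` be a morphism Lie algebra and `(V,W,ψ)` a representation.
If the Chevalley–Eilenberg cohomologies `H^n_CE(g,V)`, `H^n_CE(h,W)` and
`H^{n-1}_CE(g,W_φ)` vanish (expressed below: every alternating cocycle is a coboundary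
of an alternating cochain), then `H^n_mLA(φ,ψ)` vanishes: every `n`-cocycle
`(θ,γ,η)` of the morphism Lie algebra complex is a coboundary `δ(θ₀,γ₀,η₀)`.
(Here the degree is written as `n+2` so that all three components of cochains in
degrees `n`, `n+1`, `n+2` are alternating multilinear maps.) -/
theorem statement9 {k g h V W : Type*} [CommRing k]
    [LieRing g] [LieAlgebra k g] [LieRing h] [LieAlgebra k h]
    [AddCommGroup V] [Module k V] [AddCommGroup W] [Module k W]
    (φ : g →ₗ⁅k⁆ h) (ρV : g →ₗ⁅k⁆ Module.End k V) (ρW : h →ₗ⁅k⁆ Module.End k W)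
    (ψ : V →ₗ[k] W)
    (hψ : ∀ (x : g) (v : V), ψ (ρV x v) = ρW (φ x) (ψ v)) (n : ℕ)
    -- H^{n+2}_CE(g,V) = 0 :
    (HgV : ∀ θ : AlternatingMap k g V (Fin (n + 2)),
      ceD (fun a b : g => ⁅a, b⁆) (fun x u => ρV x u) (⇑θ) = 0 →
      ∃ θ₀ : AlternatingMap k g V (Fin (n + 1)),
        ceD (fun a b : g => ⁅a, b⁆) (fun x u => ρV x u) (⇑θ₀) = ⇑θ)
    -- H^{n+2}_CE(h,W) = 0 :
    (HhW : ∀ γ : AlternatingMap k h W (Fin (n + 2)),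
      ceD (fun a b : h => ⁅a, b⁆) (fun z w => ρW z w) (⇑γ) = 0 →
      ∃ γ₀ : AlternatingMap k h W (Fin (n + 1)),
        ceD (fun a b : h => ⁅a, b⁆) (fun z w => ρW z w) (⇑γ₀) = ⇑γ)
    -- H^{n+1}_CE(g,W_φ) = 0 :
    (HgWφ : ∀ η : AlternatingMap k g W (Fin (n + 1)),
      ceD (fun a b : g => ⁅a, b⁆) (fun x w => ρW (φ x) w) (⇑η) = 0 →
      ∃ η₀ : AlternatingMap k g W (Fin n),
        ceD (fun a b : g => ⁅a, b⁆) (fun x w => ρW (φ x) w) (⇑η₀) = ⇑η)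
    -- an (n+2)-cocycle (θ, γ, η) of the morphism Lie algebra complex:
    (θ : AlternatingMap k g V (Fin (n + 2))) (γ : AlternatingMap k h W (Fin (n + 2)))
    (η : AlternatingMap k g W (Fin (n + 1)))
    (hθ : ceD (fun a b : g => ⁅a, b⁆) (fun x u => ρV x u) (⇑θ) = 0)
    (hγ : ceD (fun a b : h => ⁅a, b⁆) (fun z w => ρW z w) (⇑γ) = 0)
    (hη : (fun y : Fin (n + 2) → g =>
        ψ (θ y) - γ (fun i => φ (y i))
          - ceD (fun a b : g => ⁅a, b⁆) (fun x w => ρW (φ x) w) (⇑η) y) = 0) :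
    -- then it is a coboundary: (θ,γ,η) = δ(θ₀,γ₀,η₀)
    ∃ (θ₀ : AlternatingMap k g V (Fin (n + 1))) (γ₀ : AlternatingMap k h W (Fin (n + 1)))
      (η₀ : AlternatingMap k g W (Fin n)),
      ceD (fun a b : g => ⁅a, b⁆) (fun x u => ρV x u) (⇑θ₀) = ⇑θ ∧
      ceD (fun a b : h => ⁅a, b⁆) (fun z w => ρW z w) (⇑γ₀) = ⇑γ ∧
      (fun y : Fin (n + 1) → g =>
        ψ (θ₀ y) - γ₀ (fun i => φ (y i))
          - ceD (fun a b : g => ⁅a, b⁆) (fun x w => ρW (φ x) w) (⇑η₀) y) = ⇑η := by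
  obtain ⟨θ₀, hθ₀⟩ := HgV θ hθ
  obtain ⟨γ₀, hγ₀⟩ := HhW γ hγ
  have hρ : ∀ (x : g) (a b : W), ρW (φ x) (a - b) = ρW (φ x) a - ρW (φ x) b :=
    fun x a b => map_sub (ρW (φ x)) a b
  set η' : AlternatingMap k g W (Fin (n + 1)) :=
    ψ.compAlternatingMap θ₀ - γ₀.compLinearMap φ.toLinearMap - η with hη'
  have hη'coe : ⇑η' = (fun y : Fin (n+1) → g => ψ (θ₀ y))
      - (fun y : Fin (n+1) → g => γ₀ (fun i => φ (y i))) - ⇑η := by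
    funext y
    simp [hη']
  have hδψθ₀ : ceD (fun a b : g => ⁅a, b⁆) (fun x w => ρW (φ x) w)
      (fun y : Fin (n+1) → g => ψ (θ₀ y)) = fun x => ψ (θ x) := by
    have := ceD_comp (fun a b : g => ⁅a, b⁆) (fun a b : g => ⁅a, b⁆)
      (fun x w => ρW (φ x) w) (fun x u => ρV x u) (id : g → g) ψ.toAddMonoidHom
      (fun a b => rfl) (fun l m => hψ l m) (⇑θ₀)
    simpa [Function.id_comp, hθ₀] using this
  have hδγ₀φ : ceD (fun a b : g => ⁅a, b⁆) (fun x w => ρW (φ x) w)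
      (fun y : Fin (n+1) → g => γ₀ (fun i => φ (y i)))
      = fun x => γ (fun i => φ (x i)) := by
    have := ceD_comp (fun a b : g => ⁅a, b⁆) (fun a b : h => ⁅a, b⁆)
      (fun x w => ρW (φ x) w) (fun z w => ρW z w) (⇑φ) (AddMonoidHom.id W)
      (fun a b => φ.map_lie a b) (fun l m => rfl) (⇑γ₀)
    simpa [Function.comp_def, hγ₀] using this
  have hδη : ceD (fun a b : g => ⁅a, b⁆) (fun x w => ρW (φ x) w) (⇑η)
      = (fun y : Fin (n+2) → g => ψ (θ y)) - fun y => γ (fun i => φ (y i)) := by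
    funext y
    have h1 := congrFun hη y
    simp only [Pi.zero_apply] at h1
    simp only [Pi.sub_apply]
    exact (sub_eq_zero.mp h1).symm
  have hcoc : ceD (fun a b : g => ⁅a, b⁆) (fun x w => ρW (φ x) w) (⇑η') = 0 := by
    rw [hη'coe, ceD_sub _ _ hρ, ceD_sub _ _ hρ, hδψθ₀, hδγ₀φ, hδη]
    abel
  obtain ⟨η₀, hη₀⟩ := HgWφ η' hcoc
  refine ⟨θ₀, γ₀, η₀, hθ₀, hγ₀, ?_⟩
  funext y
  rw [hη₀]
  simp only [hη', AlternatingMap.sub_apply, LinearMap.compAlternatingMap_apply,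
    AlternatingMap.compLinearMap_apply, LieHom.coe_toLinearMap]
  abel
end

section
/- Let (α_t, β_t) be a formal deformation of a homomorphism (α,β) between morphism Lie algebras (g,h,φ) and (g',h',φ'). Then the linear terms (α₁, β₁, 0) form a 1-cocycle in the cochain complex of (g,h,φ) with coefficients in the representation (g',h',φ') induced by (α,β); that is, α₁[x,y] = [α(x),α₁(y)] + [α₁(x),α(y)], β₁[h,k] = [β(h),β₁(k)] + [β₁(h),β(k)], and φ'∘α₁ = β₁∘φ. -/
/-- Let `(αt, βt)` be a formal deformation of a homomorphism `(α,β)`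
between morphism Lie algebras `(g,h,φ)` and `(g',h',φ')`, given by coefficient families
`A i`, `B i` with `A 0 = α`, `B 0 = β`, which preserve brackets and intertwine `φ, φ'`
coefficientwise (as formal power series).  Then the linear terms `(A 1, B 1, 0)` form a
1-cocycle in the complex of `(g,h,φ)` with coefficients in the representation
`(g',h',φ')` induced by `(α,β)`:
`A 1 [x,y] = [α x, A 1 y] + [A 1 x, α y]`, `B 1 [z,w] = [β z, B 1 w] + [B 1 z, β w]`,
and `φ' ∘ A 1 = B 1 ∘ φ`. -/
theorem statement12 {k g h g' h' : Type*} [CommRing k]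
    [LieRing g] [LieAlgebra k g] [LieRing h] [LieAlgebra k h]
    [LieRing g'] [LieAlgebra k g'] [LieRing h'] [LieAlgebra k h']
    (φ : g →ₗ⁅k⁆ h) (φ' : g' →ₗ⁅k⁆ h') (α : g →ₗ⁅k⁆ g') (β : h →ₗ⁅k⁆ h')
    (hcomm : ∀ x : g, φ' (α x) = β (φ x))
    (A : ℕ → (g →ₗ[k] g')) (B : ℕ → (h →ₗ[k] h'))
    (hA0 : A 0 = (α : g →ₗ[k] g')) (hB0 : B 0 = (β : h →ₗ[k] h'))
    (hA : ∀ (n : ℕ) (x y : g),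
      A n ⁅x, y⁆ = ∑ p ∈ Finset.HasAntidiagonal.antidiagonal n, ⁅A p.1 x, A p.2 y⁆)
    (hB : ∀ (n : ℕ) (z w : h),
      B n ⁅z, w⁆ = ∑ p ∈ Finset.HasAntidiagonal.antidiagonal n, ⁅B p.1 z, B p.2 w⁆)
    (hAB : ∀ (n : ℕ) (x : g), φ' (A n x) = B n (φ x)) :
    (∀ x y : g, A 1 ⁅x, y⁆ = ⁅α x, A 1 y⁆ + ⁅A 1 x, α y⁆) ∧
    (∀ z w : h, B 1 ⁅z, w⁆ = ⁅β z, B 1 w⁆ + ⁅B 1 z, β w⁆) ∧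
    (∀ x : g, φ' (A 1 x) = B 1 (φ x)) := by
  refine ⟨fun x y => ?_, fun z w => ?_, fun x => hAB 1 x⟩
  · have := hA 1 x y
    rw [show Finset.HasAntidiagonal.antidiagonal 1 = {(0,1),(1,0)} from rfl,
      Finset.sum_pair (by decide)] at this
    simpa [hA0, add_comm] using this
  · have := hB 1 z w
    rw [show Finset.HasAntidiagonal.antidiagonal 1 = {(0,1),(1,0)} from rfl,
      Finset.sum_pair (by decide)] at this
    simpa [hB0, add_comm] using this
end

section
/- Let (G = (g₁ →0 g₀, l₂, l₃), H = (h₁ →0 h₀, l₂', l₃'), Φ = (φ₀,φ₁,φ₂)) be a skeletal 2-term morphism sh Lie algebra. Then g₀ and h₀ are Lie algebras with brackets l₂ and l₂', φ₀ : g₀ → h₀ is a Lie algebra homomorphism, g₁ and h₁ are representations of g₀ and h₀ via l₂ and l₂', (g₁, h₁, φ₁) is a representation of the morphism Lie algebra (g₀, h₀, φ₀), and (l₃, l₃', φ₂) is a 3-cocycle in the cochain complex of (g₀, h₀, φ₀) with coefficients in (g₁, h₁, φ₁). -/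
lemma ceD3 {L M : Type*} [AddCommGroup M] (br : L → L → L) (ρ : L → M → M)
    (f : (Fin 3 → L) → M) (x : Fin 4 → L) :
    ceD br ρ f x =
      ρ (x 0) (f ![x 1, x 2, x 3]) - ρ (x 1) (f ![x 0, x 2, x 3])
        + ρ (x 2) (f ![x 0, x 1, x 3]) - ρ (x 3) (f ![x 0, x 1, x 2])
        - f ![br (x 0) (x 1), x 2, x 3] + f ![br (x 0) (x 2), x 1, x 3]
        - f ![br (x 0) (x 3), x 1, x 2] - f ![br (x 1) (x 2), x 0, x 3]
        + f ![br (x 1) (x 3), x 0, x 2] - f ![br (x 2) (x 3), x 0, x 1] := by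
  simp only [ceD, Fin.sum_univ_succ, Fin.sum_univ_zero]
  have ec : ∀ (c : L) (g : Fin 2 → L),
      (f fun t : Fin 3 => Fin.cons (α := fun _ : Fin 3 => L) c g t) = f ![c, g 0, g 1] := by
    intro c g; congr 1; funext t; fin_cases t <;> rfl
  have es : ∀ g : Fin 3 → Fin 4, f (x ∘ g) = f ![x (g 0), x (g 1), x (g 2)] := by
    intro g; congr 1; funext t; fin_cases t <;> rfl
  norm_num [Fin.succAbove]
  simp only [ec, es]
  norm_num
  simp only [show ((2:Fin 3).succAbove 0) = 0 from rfl, show ((2:Fin 3).succAbove 1) = 1 from rfl]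
  abel

lemma ceD2 {L M : Type*} [AddCommGroup M] (br : L → L → L) (ρ : L → M → M)
    (f : (Fin 2 → L) → M) (x : Fin 3 → L) :
    ceD br ρ f x =
      ρ (x 0) (f ![x 1, x 2]) - ρ (x 1) (f ![x 0, x 2]) + ρ (x 2) (f ![x 0, x 1])
        - f ![br (x 0) (x 1), x 2] + f ![br (x 0) (x 2), x 1]
        - f ![br (x 1) (x 2), x 0] := by
  simp only [ceD, Fin.sum_univ_succ, Fin.sum_univ_zero]
  have ec : ∀ (c : L) (g : Fin 1 → L),
      (f fun t : Fin 2 => Fin.cons (α := fun _ : Fin 2 => L) c g t) = f ![c, g 0] := by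
    intro c g; congr 1; funext t; fin_cases t <;> rfl
  have es : ∀ g : Fin 2 → Fin 3, f (x ∘ g) = f ![x (g 0), x (g 1)] := by
    intro g; congr 1; funext t; fin_cases t <;> rfl
  norm_num [Fin.succAbove]
  simp only [ec, es]
  norm_num
  simp only [show ((2:Fin 3).succAbove 0) = 0 from rfl, show ((2:Fin 3).succAbove 1) = 1 from rfl]
  abel

/-- Let `(G = (g₁ →0 g₀, l₂, l₃), H = (h₁ →0 h₀, l₂', l₃'),
Φ = (φ₀,φ₁,φ₂))` be a skeletal 2-term morphism sh Lie algebra (below, `act`/`act'`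
denote the mixed-degree components `l₂ : g₀ ⊗ g₁ → g₁`, `l₂' : h₀ ⊗ h₁ → h₁`; the
hypotheses are the sh Lie and homomorphism axioms with `d = 0`, `d' = 0`).  Then `g₀`
and `h₀` are Lie algebras with brackets `l₂` and `l₂'`, `φ₀` is a Lie algebra
homomorphism, `g₁` and `h₁` are representations of `g₀` and `h₀`, `(g₁,h₁,φ₁)` is a
representation of the morphism Lie algebra `(g₀,h₀,φ₀)`, and `(l₃,l₃',φ₂)` is a
3-cocycle of the morphism Lie algebra complex of `(g₀,h₀,φ₀)` with coefficients in
`(g₁,h₁,φ₁)`. -/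
theorem statement16 {k g₀ g₁ h₀ h₁ : Type*} [CommRing k]
    [AddCommGroup g₀] [Module k g₀] [AddCommGroup g₁] [Module k g₁]
    [AddCommGroup h₀] [Module k h₀] [AddCommGroup h₁] [Module k h₁]
    (l₂ : g₀ →ₗ[k] g₀ →ₗ[k] g₀) (act : g₀ →ₗ[k] g₁ →ₗ[k] g₁)
    (l₃ : AlternatingMap k g₀ g₁ (Fin 3))
    (l₂' : h₀ →ₗ[k] h₀ →ₗ[k] h₀) (act' : h₀ →ₗ[k] h₁ →ₗ[k] h₁)
    (l₃' : AlternatingMap k h₀ h₁ (Fin 3))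
    (φ₀ : g₀ →ₗ[k] h₀) (φ₁ : g₁ →ₗ[k] h₁) (φ₂ : AlternatingMap k g₀ h₁ (Fin 2))
    -- l₂, l₂' are skew-symmetric:
    (hsk : ∀ x, l₂ x x = 0) (hsk' : ∀ z, l₂' z z = 0)
    -- sh Lie axiom (iii) for G and H (with d = 0):
    (hiii : ∀ x y z : g₀, l₂ x (l₂ y z) + l₂ y (l₂ z x) + l₂ z (l₂ x y) = 0)
    (hiii' : ∀ x y z : h₀, l₂' x (l₂' y z) + l₂' y (l₂' z x) + l₂' z (l₂' x y) = 0)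
    -- sh Lie axiom (iv) for G and H (with d = 0):
    (hiv : ∀ (x y : g₀) (p : g₁),
      act x (act y p) - act y (act x p) - act (l₂ x y) p = 0)
    (hiv' : ∀ (x y : h₀) (r : h₁),
      act' x (act' y r) - act' y (act' x r) - act' (l₂' x y) r = 0)
    -- sh Lie axiom (v) for G and H:
    (hv : ∀ x y z t : g₀,
      act x (l₃ ![y, z, t]) - act y (l₃ ![x, z, t]) + act z (l₃ ![x, y, t])
          - act t (l₃ ![x, y, z])
        - l₃ ![l₂ x y, z, t] + l₃ ![l₂ x z, y, t] - l₃ ![l₂ x t, y, z]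
        - l₃ ![l₂ y z, x, t] + l₃ ![l₂ y t, x, z] - l₃ ![l₂ z t, x, y] = 0)
    (hv' : ∀ x y z t : h₀,
      act' x (l₃' ![y, z, t]) - act' y (l₃' ![x, z, t]) + act' z (l₃' ![x, y, t])
          - act' t (l₃' ![x, y, z])
        - l₃' ![l₂' x y, z, t] + l₃' ![l₂' x z, y, t] - l₃' ![l₂' x t, y, z]
        - l₃' ![l₂' y z, x, t] + l₃' ![l₂' y t, x, z] - l₃' ![l₂' z t, x, y] = 0)
    -- homomorphism axioms (ii), (iii), (iv) with d = d' = 0: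
    (hΦii : ∀ x y : g₀, 0 = φ₀ (l₂ x y) - l₂' (φ₀ x) (φ₀ y))
    (hΦiii : ∀ (x : g₀) (p : g₁), 0 = φ₁ (act x p) - act' (φ₀ x) (φ₁ p))
    (hΦiv : ∀ x y z : g₀,
      act' (φ₀ x) (φ₂ ![y, z]) + act' (φ₀ y) (φ₂ ![z, x]) + act' (φ₀ z) (φ₂ ![x, y])
          + φ₂ ![x, l₂ y z] + φ₂ ![y, l₂ z x] + φ₂ ![z, l₂ x y]
        = φ₁ (l₃ ![x, y, z]) - l₃' ![φ₀ x, φ₀ y, φ₀ z]) :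
    -- g₀, h₀ are Lie algebras:
    ((∀ x : g₀, l₂ x x = 0) ∧
      ∀ x y z : g₀, l₂ x (l₂ y z) + l₂ y (l₂ z x) + l₂ z (l₂ x y) = 0) ∧
    ((∀ z : h₀, l₂' z z = 0) ∧
      ∀ x y z : h₀, l₂' x (l₂' y z) + l₂' y (l₂' z x) + l₂' z (l₂' x y) = 0) ∧
    -- φ₀ is a Lie algebra homomorphism:
    (∀ x y : g₀, φ₀ (l₂ x y) = l₂' (φ₀ x) (φ₀ y)) ∧
    -- g₁, h₁ are representations of g₀, h₀:
    (∀ (x y : g₀) (p : g₁), act (l₂ x y) p = act x (act y p) - act y (act x p)) ∧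
    (∀ (x y : h₀) (r : h₁), act' (l₂' x y) r = act' x (act' y r) - act' y (act' x r)) ∧
    -- (g₁, h₁, φ₁) is a representation of the morphism Lie algebra (g₀, h₀, φ₀):
    (∀ (x : g₀) (p : g₁), φ₁ (act x p) = act' (φ₀ x) (φ₁ p)) ∧
    -- (l₃, l₃', φ₂) is a 3-cocycle of the morphism Lie algebra complex:
    ceD (fun a b : g₀ => l₂ a b) (fun x p => act x p) (⇑l₃) = 0 ∧
    ceD (fun a b : h₀ => l₂' a b) (fun z r => act' z r) (⇑l₃') = 0 ∧
    (fun y : Fin 3 → g₀ =>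
      φ₁ (l₃ y) - l₃' (fun i => φ₀ (y i))
        - ceD (fun a b : g₀ => l₂ a b) (fun x r => act' (φ₀ x) r) (⇑φ₂) y) = 0 := by
  have hl2 : ∀ a b : g₀, l₂ a b = - l₂ b a := by
    intro a b
    have h := hsk (a + b)
    rw [map_add] at h
    simp only [LinearMap.add_apply, map_add, hsk a, hsk b] at h
    have h' : l₂ a b + l₂ b a = 0 := by
      rw [← h]; abel
    exact eq_neg_of_add_eq_zero_left h'
  have hswap : ∀ a b : g₀, φ₂ ![a, b] = - φ₂ ![b, a] := by
    intro a b
    have h := φ₂.map_swap ![b, a] (show (0 : Fin 2) ≠ 1 by decide)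
    have h2 : (![b, a] ∘ Equiv.swap (0 : Fin 2) 1) = ![a, b] := by
      funext t; fin_cases t <;> simp
    rw [h2] at h
    exact h
  have hneg : ∀ (a v : g₀), φ₂ ![a, -v] = - φ₂ ![a, v] := by
    intro a v
    have h1 : (![a, -v] : Fin 2 → g₀) = Function.update ![a, v] 1 (-v) := by
      funext t; fin_cases t <;> simp
    have h2 : (![a, v] : Fin 2 → g₀) = Function.update ![a, v] 1 v := by
      funext t; fin_cases t <;> simp
    rw [h1, show (-v) = (-1 : k) • v by simp, φ₂.map_update_smul, ← h2, neg_one_smul]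
  refine ⟨⟨hsk, hiii⟩, ⟨hsk', hiii'⟩, ?_, ?_, ?_, ?_, ?_, ?_, ?_⟩
  · exact fun x y => sub_eq_zero.mp (hΦii x y).symm
  · exact fun x y p => (sub_eq_zero.mp (hiv x y p)).symm
  · exact fun x y r => (sub_eq_zero.mp (hiv' x y r)).symm
  · exact fun x p => sub_eq_zero.mp (hΦiii x p).symm
  · funext x
    rw [ceD3]
    exact hv (x 0) (x 1) (x 2) (x 3)
  · funext x
    rw [ceD3]
    exact hv' (x 0) (x 1) (x 2) (x 3)
  · funext y
    rw [ceD2]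
    have h1 : l₃ y = l₃ ![y 0, y 1, y 2] := by
      congr 1; funext t; fin_cases t <;> rfl
    have h2 : l₃' (fun i => φ₀ (y i)) = l₃' ![φ₀ (y 0), φ₀ (y 1), φ₀ (y 2)] := by
      congr 1; funext t; fin_cases t <;> rfl
    rw [h1, h2, hswap (y 0) (y 2), hswap (l₂ (y 0) (y 1)) (y 2),
      hswap (l₂ (y 0) (y 2)) (y 1), hswap (l₂ (y 1) (y 2)) (y 0),
      hl2 (y 0) (y 2), hneg (y 1) (l₂ (y 2) (y 0))]
    have key := hΦiv (y 0) (y 1) (y 2)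
    rw [← key]
    simp only [map_neg, Pi.zero_apply]
    abel
end

section
/- Let (G,H,Φ) be a morphism Lie group with module (V,W,ψ). Define C⁰ = V, Cⁿ = Maps(Gⁿ,V) ⊕ Maps(Hⁿ,W) ⊕ Maps(G^{n-1},W) for n ≥ 1, with differential δ(v) = (δ'v, δ''(ψv), 0) and δ(Θ,Γ,Λ) = (δ'Θ, δ''Γ, ψ∘Θ − Γ∘Φ^{×n} − δ'''Λ), where δ', δ'', δ''' are group cohomology differentials for (G,V), (H,W), and (G,W_Φ) respectively, with W_Φ the G-module via ϱ_W(Φ(−)). Then δ∘δ = 0. -/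
/-- The group cohomology differential (inhomogeneous cochains) for an action `ρ` of a
group `G` on an abelian group `V`:
`(δf)(g₁,…,g_{n+1}) = ρ(g₁)f(g₂,…,g_{n+1}) + Σᵢ(−1)ⁱ f(g₁,…,gᵢgᵢ₊₁,…,g_{n+1})
  + (−1)^{n+1} f(g₁,…,gₙ)`. -/
def gpD {G V : Type*} [Monoid G] [AddCommGroup V] (ρ : G → V → V)
    {n : ℕ} (f : (Fin n → G) → V) : (Fin (n + 1) → G) → V :=
  fun x =>
    ρ (x 0) (f (fun j => x j.succ))
      + (∑ i : Fin n, ((-1 : ℤ) ^ ((i : ℕ) + 1)) • f (fun j : Fin n =>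
          if (j : ℕ) < (i : ℕ) then x j.castSucc
          else if (j : ℕ) = (i : ℕ) then x j.castSucc * x j.succ
          else x j.succ))
      + ((-1 : ℤ) ^ (n + 1)) • f (fun j => x j.castSucc)

namespace Statement18Aux

/-- `gpD` written uniformly with `Fin.contractNth`, matching mathlib's
`inhomogeneousCochains.d`. -/
theorem gpD_eq_sum {G V : Type*} [Monoid G] [AddCommGroup V] (ρ : G → V → V) {n : ℕ}
    (f : (Fin n → G) → V) (x : Fin (n + 1) → G) :
    gpD ρ f x = ρ (x 0) (f fun i => x i.succ)
      + ∑ j : Fin (n + 1), ((-1 : ℤ) ^ ((j : ℕ) + 1)) • f (Fin.contractNth j (· * ·) x) := by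
  rw [gpD, Fin.sum_univ_castSucc]
  have h2 : Fin.contractNth (Fin.last n) (· * ·) x = fun j : Fin n => x j.castSucc := by
    funext j; exact Fin.contractNth_apply_of_lt _ _ _ _ j.isLt
  rw [h2, add_assoc]
  congr 2

universe u

/-- `gpD` agrees with mathlib's differential on inhomogeneous cochains. -/
theorem gpD_eq_d {k G : Type u} [CommRing k] [Group G] (A : Rep k G) {n : ℕ}
    (f : (Fin n → G) → A) :
    gpD (fun s u => A.ρ s u) f = (inhomogeneousCochains.d A n).hom f := by
  funext x
  rw [gpD_eq_sum, inhomogeneousCochains.d_hom_apply]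
  congr 1
  refine Finset.sum_congr rfl fun j _ => ?_
  rw [← Int.cast_smul_eq_zsmul k]
  norm_num

/-- `δ ∘ δ = 0` for a representation (same-universe case), from mathlib. -/
theorem d_sq {k G : Type u} [CommRing k] [Group G] (A : Rep.{u, u, u} k G) {n : ℕ}
    (f : (Fin n → G) → A) :
    gpD (fun s u => A.ρ s u) (gpD (fun s u => A.ρ s u) f) = 0 := by
  rw [gpD_eq_d, gpD_eq_d]
  have h := groupCohomology.inhomogeneousCochains.d_comp_d (A := A) (n := n)
  have := LinearMap.ext_iff.1 (ModuleCat.hom_ext_iff.1 h) f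
  simpa using this

universe v
variable {G : Type u} [Group G] {V : Type v} [AddCommGroup V]

/-- A universe-adjusted representation built from an action by additive automorphisms. -/
def rep' (ρ : G →* AddMonoid.End V) :
    Representation (ULift.{max u v} ℤ) (ULift.{v} G) (ULift.{u} V) where
  toFun g :=
    { toFun := fun a => ULift.up (ρ g.down a.down)
      map_add' := fun a b => by ext; simp
      map_smul' := fun c a => by
        ext
        simp [ULift.smul_def, map_zsmul] }
  map_one' := by ext a; simp
  map_mul' g h := by ext a; simp

theorem key (ρ : G →* AddMonoid.End V) {m : ℕ} (f : (Fin m → G) → V)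
    (x : Fin (m + 1) → ULift.{v} G) :
    gpD (fun s u => (rep' ρ) s u) (fun y => ULift.up (f fun i => (y i).down)) x
      = ULift.up (gpD (fun s u => ρ s u) f (fun i => (x i).down)) := by
  have hsum : ∀ (g : Fin m → ULift.{u} V),
      (∑ i, g i).down = ∑ i, (g i).down := fun g => by
    exact map_sum (AddEquiv.ulift.toAddMonoidHom) g Finset.univ
  ext
  simp only [gpD, rep', MonoidHom.coe_mk, OneHom.coe_mk, LinearMap.coe_mk, AddHom.coe_mk,
    ULift.add_down, ULift.up_down, hsum, ULift.smul_down, apply_ite ULift.down, ULift.mul_down]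

/-- The key fact: `δ ∘ δ = 0` for any group acting by additive automorphisms,
in arbitrary universes. -/
theorem gpD_gpD (ρ : G → V → V)
    (hone : ∀ a, ρ 1 a = a) (hmul : ∀ s t a, ρ (s * t) a = ρ s (ρ t a))
    (hadd : ∀ s a b, ρ s (a + b) = ρ s a + ρ s b)
    {n : ℕ} (f : (Fin n → G) → V) :
    gpD ρ (gpD ρ f) = 0 := by
  have hinv : ∀ s a, ρ s⁻¹ (ρ s a) = a := fun s a => by rw [← hmul, inv_mul_cancel, hone]
  have hinv' : ∀ s a, ρ s (ρ s⁻¹ a) = a := fun s a => by rw [← hmul, mul_inv_cancel, hone]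
  let ρ' : G →* AddMonoid.End V :=
  { toFun := fun s =>
      { toFun := ρ s, map_zero' := by simpa using hadd s 0 0, map_add' := hadd s }
    map_one' := by ext a; exact hone a
    map_mul' := fun s t => by ext a; exact hmul s t a }
  have hρ : (fun s (u : V) => ρ' s u) = ρ := rfl
  let A : Rep (ULift.{max u v} ℤ) (ULift.{v} G) := Rep.of (rep' ρ')
  have h1 : ∀ {m : ℕ} (g : (Fin m → G) → V),
      gpD (fun s u => (rep' ρ') s u) (fun y => ULift.up (g fun i => (y i).down))
        = fun z => ULift.up (gpD ρ g (fun i => (z i).down)) := by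
    intro m g; funext z; rw [key ρ' g z, hρ]
  have h3 : gpD (fun s u => (rep' ρ') s u)
      (gpD (fun s u => (rep' ρ') s u) (fun y => ULift.up (f fun i => (y i).down))) = 0 :=
    d_sq A (fun y => ULift.up (f fun i => (y i).down))
  rw [h1 f, show (fun z : Fin (n+1) → ULift.{v} G => ULift.up (gpD ρ f fun i => (z i).down))
      = fun y => ULift.up ((gpD ρ f) fun i => (y i).down) from rfl, h1 (gpD ρ f)] at h3
  funext x
  exact congrArg ULift.down (congrFun h3 (fun i => ULift.up (x i)))

/-- `gpD` commutes with an equivariant additive map. -/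
theorem gpD_hom {G V W : Type*} [Group G] [AddCommGroup V] [AddCommGroup W]
    (ρV : G → V → V) (ρW : G → W → W) (ψ : V →+ W)
    (h : ∀ s v, ψ (ρV s v) = ρW s (ψ v)) {n : ℕ} (f : (Fin n → G) → V) :
    gpD ρW (fun y => ψ (f y)) = fun x => ψ (gpD ρV f x) := by
  funext x
  simp [gpD, h, map_sum, map_zsmul]

/-- `gpD` commutes with precomposition by a group homomorphism. -/
theorem gpD_precomp {G H W : Type*} [Group G] [Group H] [AddCommGroup W] (Φ : G →* H)
    (ρW : H → W → W) {n : ℕ} (Γ : (Fin n → H) → W) :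
    gpD (fun s w => ρW (Φ s) w) (fun y => Γ fun i => Φ (y i))
      = fun x => gpD ρW Γ (fun i => Φ (x i)) := by
  funext x
  simp only [gpD]
  congr 2
  refine Finset.sum_congr rfl fun i _ => ?_
  have h : (fun j : Fin n => Φ (if (j : ℕ) < (i : ℕ) then x j.castSucc
        else if (j : ℕ) = (i : ℕ) then x j.castSucc * x j.succ else x j.succ))
      = (fun j : Fin n => if (j : ℕ) < (i : ℕ) then Φ (x j.castSucc)
        else if (j : ℕ) = (i : ℕ) then Φ (x j.castSucc) * Φ (x j.succ) else Φ (x j.succ)) :=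
    funext fun j => by split_ifs <;> simp
  rw [h]

theorem gpD_sub {G V : Type*} [Group G] [AddCommGroup V] (ρ : G → V → V)
    (hsub : ∀ s a b, ρ s (a - b) = ρ s a - ρ s b) {n : ℕ} (f g : (Fin n → G) → V) :
    gpD ρ (f - g) = gpD ρ f - gpD ρ g := by
  funext x
  simp only [gpD, Pi.sub_apply, hsub, smul_sub, Finset.sum_sub_distrib]
  abel

theorem gpD_zero {G V : Type*} [Group G] [AddCommGroup V] (ρ : G → V → V)
    (hzero : ∀ s, ρ s 0 = 0) {n : ℕ} :
    gpD ρ (0 : (Fin n → G) → V) = 0 := by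
  funext x
  simp [gpD, hzero]

end Statement18Aux

open Statement18Aux in
/-- Let `(G,H,Φ)` be a morphism Lie group with module `(V,W,ψ)`.
Define `C⁰ = V`, `Cⁿ = Maps(Gⁿ,V) ⊕ Maps(Hⁿ,W) ⊕ Maps(G^{n-1},W)` for `n ≥ 1`, with
differential `δ(v) = (δ'v, δ''(ψ v), 0)` and
`δ(Θ,Γ,Λ) = (δ'Θ, δ''Γ, ψ∘Θ − Γ∘Φ^{×n} − δ'''Λ)`, where `δ',δ'',δ'''` are the group
cohomology differentials of `(G,V)`, `(H,W)` and `(G,W_Φ)` (with `W_Φ` the `G`-module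
via `ϱW(Φ(−))`).  Then `δ ∘ δ = 0`, in every degree and every component. -/
theorem statement18 {k G H V W : Type*} [CommRing k] [Group G] [Group H]
    [AddCommGroup V] [Module k V] [AddCommGroup W] [Module k W]
    (Φ : G →* H) (ϱV : G →* (V ≃ₗ[k] V)) (ϱW : H →* (W ≃ₗ[k] W))
    (ψ : V →ₗ[k] W)
    (hψ : ∀ (s : G) (v : V), ψ (ϱV s v) = ϱW (Φ s) (ψ v)) :
    -- δ ∘ δ = 0 starting from C⁰ = V, where δ(v) = (δ'v, δ''(ψv), 0):
    (∀ v : V,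
      gpD (fun s u => ϱV s u)
          (gpD (fun s u => ϱV s u) (fun _ : Fin 0 → G => v)) = 0 ∧
      gpD (fun t w => ϱW t w)
          (gpD (fun t w => ϱW t w) (fun _ : Fin 0 → H => ψ v)) = 0 ∧
      (fun y : Fin 1 → G =>
          ψ (gpD (fun s u => ϱV s u) (fun _ : Fin 0 → G => v) y)
            - gpD (fun t w => ϱW t w) (fun _ : Fin 0 → H => ψ v) (fun i => Φ (y i))
            - gpD (fun s w => ϱW (Φ s) w) (0 : (Fin 0 → G) → W) y) = 0) ∧
    -- δ ∘ δ = 0 on Cⁿ for n ≥ 1, on a triple (Θ, Γ, Λ):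
    (∀ (n : ℕ) (Θ : (Fin (n + 1) → G) → V) (Γ : (Fin (n + 1) → H) → W)
        (Λ : (Fin n → G) → W),
      gpD (fun s u => ϱV s u) (gpD (fun s u => ϱV s u) Θ) = 0 ∧
      gpD (fun t w => ϱW t w) (gpD (fun t w => ϱW t w) Γ) = 0 ∧
      (fun y : Fin (n + 2) → G =>
          ψ (gpD (fun s u => ϱV s u) Θ y)
            - gpD (fun t w => ϱW t w) Γ (fun i => Φ (y i))
            - gpD (fun s w => ϱW (Φ s) w)
                (fun y' : Fin (n + 1) → G =>
                  ψ (Θ y') - Γ (fun i => Φ (y' i))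
                    - gpD (fun s w => ϱW (Φ s) w) Λ y') y) = 0) := by
  -- basic facts about the three actions
  have hVone : ∀ a : V, ϱV 1 a = a := by simp
  have hVmul : ∀ s t (a : V), ϱV (s * t) a = ϱV s (ϱV t a) := by
    intro s t a; rw [map_mul]; rfl
  have hVadd : ∀ s (a b : V), ϱV s (a + b) = ϱV s a + ϱV s b := by intro s a b; simp
  have hWone : ∀ a : W, ϱW 1 a = a := by simp
  have hWmul : ∀ s t (a : W), ϱW (s * t) a = ϱW s (ϱW t a) := by
    intro s t a; rw [map_mul]; rfl
  have hWadd : ∀ s (a b : W), ϱW s (a + b) = ϱW s a + ϱW s b := by intro s a b; simp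
  have hΦone : ∀ a : W, ϱW (Φ 1) a = a := by simp
  have hΦmul : ∀ s t (a : W), ϱW (Φ (s * t)) a = ϱW (Φ s) (ϱW (Φ t) a) := by
    intro s t a; rw [map_mul]; exact hWmul _ _ _
  have hΦadd : ∀ s (a b : W), ϱW (Φ s) (a + b) = ϱW (Φ s) a + ϱW (Φ s) b := by
    intro s a b; simp
  have hΦsub : ∀ s (a b : W), ϱW (Φ s) (a - b) = ϱW (Φ s) a - ϱW (Φ s) b := by
    intro s a b; simp
  have hΦzero : ∀ s : G, ϱW (Φ s) (0 : W) = 0 := by intro s; simp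
  refine ⟨fun v => ⟨?_, ?_, ?_⟩, fun n Θ Γ Λ => ⟨?_, ?_, ?_⟩⟩
  · exact gpD_gpD _ hVone hVmul hVadd _
  · exact gpD_gpD _ hWone hWmul hWadd _
  · -- degree 0, third component
    have e1 : gpD (fun s w => ϱW (Φ s) w) (fun y' : Fin 0 → G => ψ ((fun _ : Fin 0 → G => v) y'))
        = fun y => ψ (gpD (fun s u => ϱV s u) (fun _ : Fin 0 → G => v) y) :=
      gpD_hom (fun s u => ϱV s u) (fun s w => ϱW (Φ s) w) ψ.toAddMonoidHom hψ _
    have e2 : gpD (fun s w => ϱW (Φ s) w)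
          (fun y' : Fin 0 → G => (fun _ : Fin 0 → H => ψ v) (fun i => Φ (y' i)))
        = fun y => gpD (fun t w => ϱW t w) (fun _ : Fin 0 → H => ψ v) (fun i => Φ (y i)) :=
      gpD_precomp Φ (fun t w => ϱW t w) (fun _ : Fin 0 → H => ψ v)
    funext y
    have h1 := congrFun e1 y
    have h2 := congrFun e2 y
    simp only at h1 h2
    rw [Pi.zero_apply, ← h1, ← h2, gpD_zero (fun s w => ϱW (Φ s) w) hΦzero, Pi.zero_apply]
    abel
  · exact gpD_gpD _ hVone hVmul hVadd _
  · exact gpD_gpD _ hWone hWmul hWadd _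
  · -- degree n+1, third component
    have e1 : gpD (fun s w => ϱW (Φ s) w) (fun y' => ψ (Θ y'))
        = fun y => ψ (gpD (fun s u => ϱV s u) Θ y) :=
      gpD_hom (fun s u => ϱV s u) (fun s w => ϱW (Φ s) w) ψ.toAddMonoidHom hψ _
    have e2 : gpD (fun s w => ϱW (Φ s) w) (fun y' => Γ (fun i => Φ (y' i)))
        = fun y => gpD (fun t w => ϱW t w) Γ (fun i => Φ (y i)) :=
      gpD_precomp Φ (fun t w => ϱW t w) _
    have e3 : gpD (fun s w => ϱW (Φ s) w)
        (gpD (fun s w => ϱW (Φ s) w) Λ) = 0 :=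
      gpD_gpD _ hΦone hΦmul hΦadd _
    have eX : (fun y' : Fin (n + 1) → G =>
          ψ (Θ y') - Γ (fun i => Φ (y' i)) - gpD (fun s w => ϱW (Φ s) w) Λ y')
        = ((fun y' => ψ (Θ y')) - (fun y' => Γ (fun i => Φ (y' i))))
            - gpD (fun s w => ϱW (Φ s) w) Λ := rfl
    funext y
    rw [Pi.zero_apply, eX, gpD_sub (fun s w => ϱW (Φ s) w) hΦsub,
      gpD_sub (fun s w => ϱW (Φ s) w) hΦsub, e1, e2, e3]
    simp only [Pi.sub_apply, Pi.zero_apply]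
    abel
end
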